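/- Let X be a compact metric space, μ_base a Borel probability measure on X with full support, ν a Borel probability measure on X with D_KL(ν‖μ_base) < ∞, and o_i : X → ℝ^{k_i} continuous maps for i = 1,…,m. For each β > 0, let μ*_β denote the (unique) μ-component of a saddle point of the Lagrangian L with parameter β. Then, as β → ∞, d_{o_i}(μ*_β, ν) → 0 for every i = 1,…,m. -/

import Mathlib

open MeasureTheory Filter
open scoped ENNReal NNReal Classical

/-- Kullback–Leibler divergence: `∫ log (dμ/dρ) dμ` when `μ ≪ ρ` and the integral is
finite (i.e. the integrand is integrable), and `+∞` otherwise. -/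
noncomputable def klDiv {X : Type*} [MeasurableSpace X] (μ ρ : Measure X) : ℝ≥0∞ :=
  if μ ≪ ρ ∧ Integrable (fun x => Real.log (μ.rnDeriv ρ x).toReal) μ
  then ENNReal.ofReal (∫ x, Real.log (μ.rnDeriv ρ x).toReal ∂μ)
  else ⊤

/-- The observable Wasserstein distance
`d_o(μ, ν) = sup { ∫ f d(o_#μ) - ∫ f d(o_#ν) : f 1-Lipschitz }`. -/
noncomputable def obsW {X O : Type*} [MeasurableSpace X] [MeasurableSpace O]
    [PseudoEMetricSpace O] (o : X → O) (μ ν : Measure X) : ℝ :=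
  sSup {r : ℝ | ∃ f : O → ℝ, LipschitzWith 1 f ∧
    r = ∫ y, f y ∂(μ.map o) - ∫ y, f y ∂(ν.map o)}

/-- The Lagrangian `L(μ, (fᵢ)) = -D_KL(μ‖μ_base) + β ∑ᵢ (∫ fᵢ d((oᵢ)_#μ) - ∫ fᵢ d((oᵢ)_#ν))`,
with values in `[-∞, ∞)` (viewed inside `EReal`). -/
noncomputable def Lagrangian {X : Type*} [MeasurableSpace X] {m : ℕ} {k : Fin m → ℕ}
    (β : ℝ) (μbase ν : Measure X)
    (o : ∀ i : Fin m, X → EuclideanSpace ℝ (Fin (k i)))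
    (μ : Measure X) (f : ∀ i : Fin m, EuclideanSpace ℝ (Fin (k i)) → ℝ) : EReal :=
  ((β * ∑ i, (∫ y, f i y ∂(μ.map (o i)) - ∫ y, f i y ∂(ν.map (o i))) : ℝ) : EReal)
    - (klDiv μ μbase : EReal)

/-- `(μs, fs)` is a saddle point of the Lagrangian: `μs` is a Borel probability measure,
each `fs i` is 1-Lipschitz, and
`L(μ, fs) ≤ L(μs, fs) ≤ L(μs, f)` for all probability measures `μ` and all tuples `f`
of 1-Lipschitz functions. -/
def IsSaddlePoint {X : Type*} [MeasurableSpace X] {m : ℕ} {k : Fin m → ℕ}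
    (β : ℝ) (μbase ν : Measure X)
    (o : ∀ i : Fin m, X → EuclideanSpace ℝ (Fin (k i)))
    (μs : Measure X) (fs : ∀ i : Fin m, EuclideanSpace ℝ (Fin (k i)) → ℝ) : Prop :=
  IsProbabilityMeasure μs ∧ (∀ i, LipschitzWith 1 (fs i)) ∧
  (∀ μ : Measure X, IsProbabilityMeasure μ →
    Lagrangian β μbase ν o μ fs ≤ Lagrangian β μbase ν o μs fs) ∧
  (∀ f : ∀ i : Fin m, EuclideanSpace ℝ (Fin (k i)) → ℝ, (∀ i, LipschitzWith 1 (f i)) →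
    Lagrangian β μbase ν o μs fs ≤ Lagrangian β μbase ν o μs f)


section Aux

variable {X : Type*} [MetricSpace X] [CompactSpace X] [MeasurableSpace X] [BorelSpace X]
variable {O : Type*} [MetricSpace O] [MeasurableSpace O] [BorelSpace O]

lemma aux_nonempty {Y : Type*} [MeasurableSpace Y] (μ : Measure Y) [IsProbabilityMeasure μ] :
    Nonempty Y := by
  by_contra h
  rw [not_nonempty_iff] at h
  have h1 : μ Set.univ = 1 := measure_univ
  rw [Set.univ_eq_empty_iff.mpr h, measure_empty] at h1
  exact zero_ne_one h1

lemma aux_integrable (μ : Measure X) [IsFiniteMeasure μ] {g : X → ℝ} (hg : Continuous g) :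
    Integrable g μ := by
  have := hg.continuousOn.integrableOn_compact (isCompact_univ (X := X)) (μ := μ)
  rwa [integrableOn_univ] at this

lemma aux_map_integral (μ : Measure X) {o : X → O} (ho : Continuous o)
    {f : O → ℝ} (hf : Continuous f) :
    ∫ y, f y ∂(μ.map o) = ∫ x, f (o x) ∂μ :=
  integral_map ho.aemeasurable hf.aestronglyMeasurable

lemma aux_diff_le (μ ν : Measure X) [IsProbabilityMeasure μ] [IsProbabilityMeasure ν]
    {o : X → O} (ho : Continuous o) {f : O → ℝ} (hf : LipschitzWith 1 f) (x0 : X) :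
    ∫ y, f y ∂(μ.map o) - ∫ y, f y ∂(ν.map o) ≤ 2 * Metric.diam (Set.range o) := by
  set D := Metric.diam (Set.range o) with hD
  have hbd : Bornology.IsBounded (Set.range o) := (isCompact_range ho).isBounded
  have hfo : Continuous fun x => f (o x) := hf.continuous.comp ho
  have hbound : ∀ x y : X, f (o x) - f (o y) ≤ D := by
    intro x y
    calc f (o x) - f (o y) ≤ |f (o x) - f (o y)| := le_abs_self _
      _ = dist (f (o x)) (f (o y)) := (Real.dist_eq _ _).symm
      _ ≤ 1 * dist (o x) (o y) := hf.dist_le_mul _ _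
      _ = dist (o x) (o y) := one_mul _
      _ ≤ D := Metric.dist_le_diam_of_mem hbd (Set.mem_range_self x) (Set.mem_range_self y)
  have h1 : ∫ y, f y ∂(μ.map o) ≤ f (o x0) + D := by
    rw [aux_map_integral μ ho hf.continuous]
    calc ∫ x, f (o x) ∂μ ≤ ∫ _, f (o x0) + D ∂μ := by
          apply integral_mono (aux_integrable μ hfo) (integrable_const _)
          intro x; dsimp only; linarith [hbound x x0]
      _ = f (o x0) + D := by simp
  have h2 : f (o x0) - D ≤ ∫ y, f y ∂(ν.map o) := by
    rw [aux_map_integral ν ho hf.continuous]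
    calc f (o x0) - D = ∫ _, f (o x0) - D ∂ν := by simp
      _ ≤ ∫ x, f (o x) ∂ν := by
          apply integral_mono (integrable_const _) (aux_integrable ν hfo)
          intro x; dsimp only; linarith [hbound x0 x]
  linarith

lemma aux_zero_mem (μ ν : Measure X) (o : X → O) :
    (0 : ℝ) ∈ {r : ℝ | ∃ f : O → ℝ, LipschitzWith 1 f ∧
      r = ∫ y, f y ∂(μ.map o) - ∫ y, f y ∂(ν.map o)} :=
  ⟨fun _ => 0, (LipschitzWith.const' 0).weaken zero_le_one, by simp⟩

lemma aux_bddAbove (μ ν : Measure X) [IsProbabilityMeasure μ] [IsProbabilityMeasure ν]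
    {o : X → O} (ho : Continuous o) :
    BddAbove {r : ℝ | ∃ f : O → ℝ, LipschitzWith 1 f ∧
      r = ∫ y, f y ∂(μ.map o) - ∫ y, f y ∂(ν.map o)} := by
  obtain ⟨x0⟩ := aux_nonempty μ
  refine ⟨2 * Metric.diam (Set.range o), ?_⟩
  rintro r ⟨f, hf, rfl⟩
  exact aux_diff_le μ ν ho hf x0

lemma obsW_nonneg (μ ν : Measure X) [IsProbabilityMeasure μ] [IsProbabilityMeasure ν]
    {o : X → O} (ho : Continuous o) : 0 ≤ obsW o μ ν :=
  le_csSup (aux_bddAbove μ ν ho) (aux_zero_mem μ ν o)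

lemma obsW_exists_lt (μ ν : Measure X) [IsProbabilityMeasure μ] [IsProbabilityMeasure ν]
    {o : X → O} (ho : Continuous o) {ε : ℝ} (hε : 0 < ε) :
    ∃ f : O → ℝ, LipschitzWith 1 f ∧
      obsW o μ ν - ε < ∫ y, f y ∂(μ.map o) - ∫ y, f y ∂(ν.map o) := by
  have h : obsW o μ ν - ε < sSup {r : ℝ | ∃ f : O → ℝ, LipschitzWith 1 f ∧
      r = ∫ y, f y ∂(μ.map o) - ∫ y, f y ∂(ν.map o)} := sub_lt_self _ hε
  obtain ⟨r, ⟨f, hf, rfl⟩, hlt⟩ := exists_lt_of_lt_csSup ⟨0, aux_zero_mem μ ν o⟩ h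
  exact ⟨f, hf, hlt⟩

end Aux

theorem saddle_point_obsW_tendsto_zero
    {X : Type*} [MetricSpace X] [CompactSpace X] [MeasurableSpace X] [BorelSpace X]
    {m : ℕ} {k : Fin m → ℕ}
    (μbase ν : Measure X) [IsProbabilityMeasure μbase] [IsProbabilityMeasure ν]
    [μbase.IsOpenPosMeasure]
    (hKL : klDiv ν μbase < ⊤)
    (o : ∀ i : Fin m, X → EuclideanSpace ℝ (Fin (k i)))
    (ho : ∀ i, Continuous (o i))
    (μstar : ℝ → Measure X)
    (hsaddle : ∀ β : ℝ, 0 < β →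
      ∃ fs : ∀ i : Fin m, EuclideanSpace ℝ (Fin (k i)) → ℝ,
        IsSaddlePoint β μbase ν o (μstar β) fs) :
    ∀ i : Fin m, Tendsto (fun β : ℝ => obsW (o i) (μstar β) ν) atTop (nhds 0) := by
  intro i
  set C := (klDiv ν μbase).toReal with hCdef
  have hcoe : ∀ x : ℝ≥0∞, x ≠ ⊤ → ((x.toReal : ℝ) : EReal) = (x : EReal) := by
    intro x hx
    rw [← EReal.toReal_coe_ennreal]
    exact EReal.coe_toReal (by simpa [EReal.coe_ennreal_eq_top_iff] using hx)
      (EReal.coe_ennreal_ne_bot x)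
  have key : ∀ β : ℝ, 0 < β → obsW (o i) (μstar β) ν ≤ C / β := by
    intro β hβ
    obtain ⟨fs, hP, hLip, hμside, hfside⟩ := hsaddle β hβ
    haveI := hP
    -- value of the Lagrangian at ν
    have hLν : Lagrangian β μbase ν o ν fs = ((-C : ℝ) : EReal) := by
      simp only [Lagrangian]
      rw [show (∑ j, (∫ y, fs j y ∂(ν.map (o j)) - ∫ y, fs j y ∂(ν.map (o j)))) = 0 by simp]
      rw [mul_zero, ← hcoe _ hKL.ne, ← EReal.coe_sub]
      norm_num
      exact hCdef.symm
    have h1 := hμside ν inferInstance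
    rw [hLν] at h1
    -- klDiv (μstar β) μbase is finite
    have hklμ : klDiv (μstar β) μbase ≠ ⊤ := by
      intro htop
      simp only [Lagrangian, htop, EReal.coe_ennreal_top, EReal.sub_top] at h1
      exact absurd h1 (not_le.mpr (EReal.bot_lt_coe _))
    set Cμ : ℝ := (klDiv (μstar β) μbase).toReal with hCμdef
    have hCμ0 : 0 ≤ Cμ := ENNReal.toReal_nonneg
    have hLμ : ∀ f : ∀ j : Fin m, EuclideanSpace ℝ (Fin (k j)) → ℝ,
        Lagrangian β μbase ν o (μstar β) f
          = (((β * ∑ j, (∫ y, f j y ∂((μstar β).map (o j)) - ∫ y, f j y ∂(ν.map (o j)))) - Cμ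
              : ℝ) : EReal) := by
      intro f
      simp only [Lagrangian]
      rw [← hcoe _ hklμ, ← EReal.coe_sub]
    rw [hLμ fs] at h1
    set a : ℝ := β * ∑ j, (∫ y, fs j y ∂((μstar β).map (o j)) - ∫ y, fs j y ∂(ν.map (o j)))
      with hadef
    have h1' : -C ≤ a - Cμ := by exact_mod_cast h1
    have hWnn : ∀ j, 0 ≤ obsW (o j) (μstar β) ν := fun j => obsW_nonneg _ _ (ho j)
    -- main estimate with near-optimal Kantorovich potentials
    have main : ∀ ε : ℝ, 0 < ε →
        β * ∑ j, obsW (o j) (μstar β) ν ≤ C + β * m * ε := by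
      intro ε hε
      have hch : ∀ j : Fin m, ∃ g : EuclideanSpace ℝ (Fin (k j)) → ℝ, LipschitzWith 1 g ∧
          obsW (o j) (μstar β) ν - ε
            < ∫ y, g y ∂((μstar β).map (o j)) - ∫ y, g y ∂(ν.map (o j)) :=
        fun j => obsW_exists_lt (μstar β) ν (ho j) hε
      choose g hg1 hg2 using hch
      have h2 := hfside (fun j y => -(g j y)) (fun j => (hg1 j).neg)
      rw [hLμ fs, hLμ (fun j y => -(g j y))] at h2
      have hneg : ∀ j : Fin m,
          (∫ y, -(g j y) ∂((μstar β).map (o j)) - ∫ y, -(g j y) ∂(ν.map (o j)))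
            = -((∫ y, g j y ∂((μstar β).map (o j))) - ∫ y, g j y ∂(ν.map (o j))) := by
        intro j
        rw [integral_neg, integral_neg]; ring
      rw [show (∑ j, (∫ y, -(g j y) ∂((μstar β).map (o j)) - ∫ y, -(g j y) ∂(ν.map (o j))))
          = -∑ j, ((∫ y, g j y ∂((μstar β).map (o j))) - ∫ y, g j y ∂(ν.map (o j))) by
        rw [← Finset.sum_neg_distrib]; exact Finset.sum_congr rfl fun j _ => hneg j] at h2
      set R : ℝ := ∑ j, ((∫ y, g j y ∂((μstar β).map (o j))) - ∫ y, g j y ∂(ν.map (o j)))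
        with hRdef
      have h2' : a - Cμ ≤ β * (-R) - Cμ := by exact_mod_cast h2
      have hβR : β * R ≤ C := by nlinarith
      have hr : (∑ j, obsW (o j) (μstar β) ν) - m * ε ≤ R := by
        have hs : ∑ j, (obsW (o j) (μstar β) ν - ε) ≤ R :=
          Finset.sum_le_sum fun j _ => (hg2 j).le
        have : ∑ j : Fin m, (obsW (o j) (μstar β) ν - ε)
            = (∑ j, obsW (o j) (μstar β) ν) - m * ε := by
          rw [Finset.sum_sub_distrib, Finset.sum_const, Finset.card_univ, Fintype.card_fin,
            nsmul_eq_mul]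
        linarith [this ▸ hs]
      nlinarith [mul_le_mul_of_nonneg_left hr hβ.le]
    have hsum : β * ∑ j, obsW (o j) (μstar β) ν ≤ C := by
      refine le_of_forall_pos_le_add ?_
      intro δ hδ
      have hm : (0 : ℝ) < m := by exact_mod_cast i.pos
      have hε : 0 < δ / (β * m) := by positivity
      have h := main _ hε
      have : β * (m : ℝ) * (δ / (β * m)) = δ := by field_simp
      linarith [this ▸ h]
    have hWi : obsW (o i) (μstar β) ν ≤ ∑ j, obsW (o j) (μstar β) ν :=
      Finset.single_le_sum (fun j _ => hWnn j) (Finset.mem_univ i)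
    rw [le_div_iff₀ hβ]
    nlinarith [mul_le_mul_of_nonneg_left hWi hβ.le]
  have hnn : ∀ β : ℝ, 0 < β → 0 ≤ obsW (o i) (μstar β) ν := by
    intro β hβ
    obtain ⟨fs, hP, -⟩ := hsaddle β hβ
    haveI := hP
    exact obsW_nonneg _ _ (ho i)
  have hdiv : Tendsto (fun β : ℝ => C / β) atTop (nhds 0) :=
    Tendsto.div_atTop tendsto_const_nhds tendsto_id
  refine tendsto_of_tendsto_of_tendsto_of_le_of_le' tendsto_const_nhds hdiv ?_ ?_
  · filter_upwards [eventually_gt_atTop 0] with β hβ using hnn β hβ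
  · filter_upwards [eventually_gt_atTop 0] with β hβ using key β hβ
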